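/- Let β be a Hermitian matrix on ℂ^{n+1} with eigenvalues c₀ < … < c_r and eigenspaces V₀, …, V_r, and let [z] ∈ ℙⁿ(ℂ). Write z = z₀ + … + z_r with z_i ∈ V_i, and let j be the largest index with z_j ≠ 0. Then lim_{t → +∞} [exp(tβ) z] = [z_j] in ℙⁿ(ℂ). -/

import Mathlib

open scoped LinearAlgebra.Projectivization

/-- The quotient topology on projective space. -/
noncomputable instance projectivizationTopology {K V : Type*} [DivisionRing K]
    [AddCommGroup V] [Module K V] [TopologicalSpace V] :
    TopologicalSpace (ℙ K V) := by
  unfold Projectivization; infer_instance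

/-- exp of an operator applied to an eigenvector. -/
lemma exp_apply_eigenvector {E : Type*} [NormedAddCommGroup E] [NormedSpace ℂ E]
    [CompleteSpace E] (A : E →L[ℂ] E) (v : E) (a : ℂ) (h : A v = a • v) :
    NormedSpace.exp A v = Complex.exp a • v := by
  have hpow : ∀ k : ℕ, (A ^ k) v = a ^ k • v := by
    intro k
    induction k with
    | zero => simp
    | succ k ih =>
      rw [pow_succ, ContinuousLinearMap.mul_apply, h, map_smul, ih, smul_smul, pow_succ,
        mul_comm]
  have hsum : Summable fun k : ℕ => (k.factorial⁻¹ : ℂ) • A ^ k :=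
    NormedSpace.expSeries_summable' (𝕂 := ℂ) A
  have := ((hsum.hasSum.map (ContinuousLinearMap.apply ℂ E v)
    (ContinuousLinearMap.apply ℂ E v).continuous).tsum_eq)
  have h1 : NormedSpace.exp A v = ∑' k : ℕ, (k.factorial⁻¹ : ℂ) • (A ^ k) v := by
    rw [NormedSpace.exp_eq_tsum ℂ]
    exact this.symm
  rw [h1]
  have h2 : ∀ k : ℕ, (k.factorial⁻¹ : ℂ) • (A ^ k) v
      = ((k.factorial⁻¹ : ℂ) * a ^ k) • v := by
    intro k; rw [hpow, smul_smul]
  simp_rw [h2]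
  have h3 : (∑' k : ℕ, ((k.factorial⁻¹ : ℂ) * a ^ k)) = Complex.exp a := by
    simp [Complex.exp_eq_exp_ℂ, NormedSpace.exp_eq_tsum ℂ, smul_eq_mul]
  rw [Summable.tsum_smul_const, h3]
  simpa [smul_eq_mul] using NormedSpace.expSeries_summable' (𝕂 := ℂ) a

/-- Let `β` be Hermitian on `ℂ^{n+1}` with eigenvalues `c 0 < … < c r` and write
`z = z₀ + … + z_r` with `z_i` in the eigenspace of `c i`.  If `j` is the largest index
with `z_j ≠ 0`, then `[exp(tβ) z] → [z_j]` in `ℙⁿ(ℂ)` as `t → +∞`. -/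
theorem stmt_15 {n r : ℕ}
    (β : EuclideanSpace ℂ (Fin (n + 1)) →L[ℂ] EuclideanSpace ℂ (Fin (n + 1)))
    (hherm : ∀ z w : EuclideanSpace ℂ (Fin (n + 1)),
      (inner ℂ (β z) w : ℂ) = inner ℂ z (β w))
    (c : Fin (r + 1) → ℝ) (hmono : StrictMono c)
    (z : EuclideanSpace ℂ (Fin (n + 1)))
    (zc : Fin (r + 1) → EuclideanSpace ℂ (Fin (n + 1)))
    (hdecomp : z = ∑ i, zc i)
    (heig : ∀ i, β (zc i) = (c i : ℂ) • zc i)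
    (j : Fin (r + 1)) (hj : zc j ≠ 0) (hmax : ∀ i, j < i → zc i = 0)
    (hnz : ∀ t : ℝ, NormedSpace.exp ((t : ℂ) • β) z ≠ 0) :
    Filter.Tendsto
      (fun t : ℝ => Projectivization.mk ℂ (NormedSpace.exp ((t : ℂ) • β) z) (hnz t))
      Filter.atTop (nhds (Projectivization.mk ℂ (zc j) hj)) := by
  classical
  set w : ℝ → EuclideanSpace ℂ (Fin (n + 1)) := fun t => ∑ i, Complex.exp ((t : ℂ) * ((c i : ℂ) - (c j : ℂ))) • zc i
    with hw
  have hexp : ∀ t : ℝ, NormedSpace.exp ((t : ℂ) • β) z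
      = Complex.exp ((t : ℂ) * (c j : ℂ)) • w t := by
    intro t
    have h1 : NormedSpace.exp ((t : ℂ) • β) z
        = ∑ i, Complex.exp ((t : ℂ) * (c i : ℂ)) • zc i := by
      rw [hdecomp, map_sum]
      refine Finset.sum_congr rfl fun i _ => ?_
      apply exp_apply_eigenvector
      rw [ContinuousLinearMap.smul_apply, heig, smul_smul]
    rw [h1, hw, Finset.smul_sum]
    refine Finset.sum_congr rfl fun i _ => ?_
    rw [smul_smul, ← Complex.exp_add]
    ring_nf
  have hwnz : ∀ t : ℝ, w t ≠ 0 := by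
    intro t h0
    exact hnz t (by rw [hexp t, h0, smul_zero])
  have hlim : Filter.Tendsto w Filter.atTop (nhds (zc j)) := by
    have hzj : zc j = ∑ i, (if i = j then zc j else 0) := by simp
    rw [hzj, hw]
    refine tendsto_finset_sum _ fun i _ => ?_
    rcases lt_trichotomy i j with hij | hij | hij
    · simp only [if_neg hij.ne]
      have ha : c i - c j < 0 := sub_neg.2 (hmono hij)
      have hsc : Filter.Tendsto (fun t : ℝ =>
          Complex.exp ((t : ℂ) * ((c i : ℂ) - (c j : ℂ)))) Filter.atTop (nhds 0) := by
        rw [tendsto_zero_iff_norm_tendsto_zero]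
        have hre : ∀ t : ℝ, ‖Complex.exp ((t : ℂ) * ((c i : ℂ) - (c j : ℂ)))‖
            = Real.exp (t * (c i - c j)) := by
          intro t
          rw [Complex.norm_exp]
          norm_num [Complex.mul_re]
        simp_rw [hre]
        refine Real.tendsto_exp_atBot.comp ?_
        exact Filter.Tendsto.atTop_mul_const_of_neg ha Filter.tendsto_id
      simpa using hsc.smul_const (zc i)
    · subst hij
      simp only [if_pos rfl, sub_self, mul_zero, Complex.exp_zero, one_smul]
      exact tendsto_const_nhds
    · simp only [if_neg hij.ne', hmax i hij, smul_zero]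
      exact tendsto_const_nhds
  have key : Filter.Tendsto (fun t => Projectivization.mk ℂ (w t) (hwnz t)) Filter.atTop
      (nhds (Projectivization.mk ℂ (zc j) hj)) := by
    have hsub : Filter.Tendsto (fun t => (⟨w t, hwnz t⟩ : { v : EuclideanSpace ℂ (Fin (n + 1)) // v ≠ 0 }))
        Filter.atTop (nhds ⟨zc j, hj⟩) := by
      rw [tendsto_subtype_rng]
      exact hlim
    have hcont : Continuous (fun v : { v : EuclideanSpace ℂ (Fin (n + 1)) // v ≠ 0 } => Projectivization.mk ℂ v.1 v.2) :=
      continuous_quotient_mk'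
    exact (hcont.tendsto _).comp hsub
  have hmk : ∀ t : ℝ, Projectivization.mk ℂ (NormedSpace.exp ((t : ℂ) • β) z) (hnz t)
      = Projectivization.mk ℂ (w t) (hwnz t) := by
    intro t
    rw [Projectivization.mk_eq_mk_iff]
    exact ⟨Units.mk0 _ (Complex.exp_ne_zero ((t : ℂ) * (c j : ℂ))), (hexp t).symm⟩
  simpa only [hmk] using key
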